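/- The DF best response ρ*(W) = [XW + X + YZ + Z - √((XW + X - YZ + Z)² + 4YZ²)]/(2YZ) satisfies dρ*/dW > 0 for all W > 0, i.e., it is strictly increasing in W, for fixed X, Y, Z > 0. -/

import Mathlib

lemma aux_hasDeriv (X Y Z : ℝ) (hX : 0 < X) (hY : 0 < Y) (hZ : 0 < Z) (W : ℝ) :
    HasDerivAt (fun W => (X * W + X + Y * Z + Z -
      Real.sqrt ((X * W + X - Y * Z + Z) ^ 2 + 4 * Y * Z ^ 2)) / (2 * Y * Z))
      ((X - (X * W + X - Y * Z + Z) * X /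
        Real.sqrt ((X * W + X - Y * Z + Z) ^ 2 + 4 * Y * Z ^ 2)) / (2 * Y * Z)) W := by
  set t := X * W + X - Y * Z + Z with ht
  have hg : HasDerivAt (fun W => (X * W + X - Y * Z + Z) ^ 2 + 4 * Y * Z ^ 2)
      (2 * t ^ 1 * X) W := by
    have h1 : HasDerivAt (fun W : ℝ => X * W + X - Y * Z + Z) X W := by
      have h : HasDerivAt (fun x : ℝ => X * x + (X - Y * Z + Z)) X W := by
        simpa using ((hasDerivAt_id W).const_mul X).add_const (X - Y * Z + Z)
      exact h.congr_of_eventuallyEq (Filter.Eventually.of_forall fun x => by ring)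
    simpa using ((h1.pow 2).add_const (4 * Y * Z ^ 2))
  have hpos : 0 < t ^ 2 + 4 * Y * Z ^ 2 := by positivity
  have hs : HasDerivAt (fun W => Real.sqrt ((X * W + X - Y * Z + Z) ^ 2 + 4 * Y * Z ^ 2))
      ((2 * t ^ 1 * X) / (2 * Real.sqrt (t ^ 2 + 4 * Y * Z ^ 2))) W := by
    have := (Real.hasDerivAt_sqrt hpos.ne').comp W hg
    simpa [Function.comp_def, mul_comm, div_eq_mul_inv, mul_assoc] using this
  have hlin : HasDerivAt (fun W : ℝ => X * W + X + Y * Z + Z) X W := by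
    have h : HasDerivAt (fun x : ℝ => X * x + (X + Y * Z + Z)) X W := by
      simpa using ((hasDerivAt_id W).const_mul X).add_const (X + Y * Z + Z)
    exact h.congr_of_eventuallyEq (Filter.Eventually.of_forall fun x => by ring)
  have := (hlin.sub hs).div_const (2 * Y * Z)
  have hsq : 0 < Real.sqrt (t ^ 2 + 4 * Y * Z ^ 2) := Real.sqrt_pos.mpr hpos
  refine this.congr_deriv ?_
  field_simp

lemma aux_pos (X Y Z : ℝ) (hX : 0 < X) (hY : 0 < Y) (hZ : 0 < Z) (W : ℝ) :
    0 < (X - (X * W + X - Y * Z + Z) * X /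
        Real.sqrt ((X * W + X - Y * Z + Z) ^ 2 + 4 * Y * Z ^ 2)) / (2 * Y * Z) := by
  set t := X * W + X - Y * Z + Z with ht
  have hpos : 0 < t ^ 2 + 4 * Y * Z ^ 2 := by positivity
  have hsq : 0 < Real.sqrt (t ^ 2 + 4 * Y * Z ^ 2) := Real.sqrt_pos.mpr hpos
  have hts : t < Real.sqrt (t ^ 2 + 4 * Y * Z ^ 2) := by
    calc t ≤ |t| := le_abs_self t
    _ = Real.sqrt (t ^ 2) := (Real.sqrt_sq_eq_abs t).symm
    _ < Real.sqrt (t ^ 2 + 4 * Y * Z ^ 2) := by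
        apply Real.sqrt_lt_sqrt (by positivity)
        have : 0 < 4 * Y * Z ^ 2 := by positivity
        linarith
  have : t * X / Real.sqrt (t ^ 2 + 4 * Y * Z ^ 2) < X := by
    rw [div_lt_iff₀ hsq]
    nlinarith
  apply div_pos (by linarith) (by positivity)

theorem stmt_14 (X Y Z : ℝ) (hX : 0 < X) (hY : 0 < Y) (hZ : 0 < Z)
    (ρstar : ℝ → ℝ)
    (hρ : ∀ W, ρstar W = (X * W + X + Y * Z + Z -
      Real.sqrt ((X * W + X - Y * Z + Z) ^ 2 + 4 * Y * Z ^ 2)) / (2 * Y * Z)) :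
    (∀ W > (0 : ℝ), 0 < deriv ρstar W) ∧ StrictMonoOn ρstar (Set.Ioi 0) := by
  have hfun : ρstar = fun W => (X * W + X + Y * Z + Z -
      Real.sqrt ((X * W + X - Y * Z + Z) ^ 2 + 4 * Y * Z ^ 2)) / (2 * Y * Z) :=
    funext hρ
  have hderiv : ∀ W, deriv ρstar W = (X - (X * W + X - Y * Z + Z) * X /
        Real.sqrt ((X * W + X - Y * Z + Z) ^ 2 + 4 * Y * Z ^ 2)) / (2 * Y * Z) := by
    intro W
    rw [hfun]
    exact (aux_hasDeriv X Y Z hX hY hZ W).deriv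
  constructor
  · intro W _
    rw [hderiv W]
    exact aux_pos X Y Z hX hY hZ W
  · apply strictMonoOn_of_deriv_pos (convex_Ioi 0)
    · rw [hfun]
      fun_prop
    · intro W hW
      rw [interior_Ioi] at hW
      rw [hderiv W]
      exact aux_pos X Y Z hX hY hZ W
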